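/- Let d > 0, γ > 0, h > 0, ν ∈ (0,1), θ ∈ (0,1] with γ > dh, and set p = d/((γ − dh)ν). Then for all s ≥ 0, q ≥ 0 with q + s > 0, the extinction-boundary equation p(γ − dh)(νq + s(θ + ν − θν)) = d(q + s) + dp(1 − ν) holds if and only if s = d/((γ − dh)θ). In particular, at this value of p the prey isocline coincides with the vertical predator isocline s = d/((γ − dh)θ), independently of q. -/

import Mathlib

/-- At the special encounter rate `p = d/((γ - dh)ν)`, the extinction
boundary (prey isocline) coincides with the vertical predator isocline
`s = d/((γ - dh)θ)`, independently of `q`. -/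
theorem stmt16 (p d γ h ν θ : ℝ)
    (hd : 0 < d) (hγ : 0 < γ) (hh : 0 < h)
    (hν : ν ∈ Set.Ioo (0 : ℝ) 1) (hθ : θ ∈ Set.Ioc (0 : ℝ) 1)
    (hγdh : γ > d * h)
    (hpdef : p = d / ((γ - d * h) * ν)) :
    ∀ s q : ℝ, 0 ≤ s → 0 ≤ q → 0 < q + s →
      (p * (γ - d * h) * (ν * q + s * (θ + ν - θ * ν)) =
          d * (q + s) + d * p * (1 - ν) ↔
        s = d / ((γ - d * h) * θ)) := by
  obtain ⟨hν0, hν1⟩ := hν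
  obtain ⟨hθ0, hθ1⟩ := hθ
  have hg : (0:ℝ) < γ - d * h := by linarith
  intro s q hs hq hqs
  subst hpdef
  have hgn : (γ - d * h) ≠ 0 := ne_of_gt hg
  have hνn : ν ≠ 0 := ne_of_gt hν0
  have hθn : θ ≠ 0 := ne_of_gt hθ0
  have h1ν : (0:ℝ) < 1 - ν := by linarith
  field_simp
  constructor <;> intro H
  · have key : d * (1 - ν) * (s * ((γ - d * h) * θ)) = d * (1 - ν) * d := by
      linear_combination d * H
    exact mul_left_cancel₀ (by positivity : d * (1 - ν) ≠ 0) (by linear_combination key)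
  · linear_combination (1 - ν) * H
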